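/- Let P be a probability measure on ℝ^k × ℝ for a random pair (U, V) such that the conditional density f_{V|U} is uniformly bounded by M. Let 𝓕 be a class of real-valued functions on ℝ^k. Then the class 𝓖 := {(u,v) ↦ 1{v ≤ f(u)} : f ∈ 𝓕} satisfies N_{[]}(𝓖, ε, L²(P)) ≤ N_{[]}(𝓕, Cε², ‖·‖_∞) for some constant C depending only on M. -/
import Mathlib


open MeasureTheory Set

theorem stmt9 (k : ℕ) (M : ℝ) (hM : 0 < M) :
    ∃ C > 0, ∀ (P : Measure ((Fin k → ℝ) × ℝ)), IsProbabilityMeasure P →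
      (∀ g : (Fin k → ℝ) → ℝ, Measurable g → ∀ r : ℝ, 0 ≤ r →
        P {p | |p.2 - g p.1| ≤ r} ≤ ENNReal.ofReal (2 * M * r)) →
      ∀ 𝓕 : Set ((Fin k → ℝ) → ℝ), (∀ f ∈ 𝓕, Measurable f) →
      ∀ ε : ℝ, 0 < ε →
      ∀ B𝓕 : Finset (((Fin k → ℝ) → ℝ) × (((Fin k → ℝ) → ℝ))),
        (∀ p ∈ B𝓕, Measurable p.1 ∧ Measurable p.2) →
        (∀ f ∈ 𝓕, ∃ p ∈ B𝓕, (∀ x, p.1 x ≤ f x ∧ f x ≤ p.2 x) ∧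
          ∀ x, p.2 x - p.1 x ≤ C * ε ^ 2) →
        ∃ B𝓖 : Finset ((((Fin k → ℝ) × ℝ) → ℝ) × (((Fin k → ℝ) × ℝ) → ℝ)),
          (∀ g ∈ {g | ∃ f ∈ 𝓕, g = fun p : (Fin k → ℝ) × ℝ => if p.2 ≤ f p.1 then (1:ℝ) else 0},
            ∃ p ∈ B𝓖, (∀ q, p.1 q ≤ g q ∧ g q ≤ p.2 q) ∧
              ∫ q, (p.2 q - p.1 q) ^ 2 ∂P ≤ ε ^ 2) ∧
          B𝓖.card ≤ B𝓕.card := by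
  refine ⟨1 / (2 * M), by positivity, ?_⟩
  classical
  intro P hP hDens 𝓕 h𝓕 ε hε B𝓕 hBmeas hBbr
  refine ⟨B𝓕.image (fun p =>
    (fun q : (Fin k → ℝ) × ℝ => if q.2 ≤ p.1 q.1 then (1:ℝ) else 0,
     fun q : (Fin k → ℝ) × ℝ => if q.2 ≤ p.2 q.1 then (1:ℝ) else 0)), ?_,
    Finset.card_image_le⟩
  intro g hg
  obtain ⟨f, hf, rfl⟩ := hg
  obtain ⟨p, hpB, hbr, hsize⟩ := hBbr f hf
  obtain ⟨hml, hmu⟩ := hBmeas p hpB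
  refine ⟨_, Finset.mem_image_of_mem _ hpB, ?_, ?_⟩
  · intro q
    constructor
    · by_cases h1 : q.2 ≤ p.1 q.1
      · simp [h1, if_pos (h1.trans (hbr q.1).1)]
      · simp only [h1, if_false]
        split_ifs <;> norm_num
    · by_cases h1 : q.2 ≤ f q.1
      · simp [h1, if_pos (h1.trans (hbr q.1).2)]
      · simp only [h1, if_false]
        split_ifs <;> norm_num
  · set S : Set ((Fin k → ℝ) × ℝ) := {q | p.1 q.1 < q.2 ∧ q.2 ≤ p.2 q.1} with hS
    have hSmeas : MeasurableSet S := by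
      apply MeasurableSet.inter
      · exact measurableSet_lt (hml.comp measurable_fst) measurable_snd
      · exact measurableSet_le measurable_snd (hmu.comp measurable_fst)
    have hfun : (fun q : (Fin k → ℝ) × ℝ =>
        ((if q.2 ≤ p.2 q.1 then (1:ℝ) else 0) - (if q.2 ≤ p.1 q.1 then (1:ℝ) else 0)) ^ 2)
        = S.indicator 1 := by
      funext q
      by_cases h1 : q.2 ≤ p.1 q.1
      · have h2 : q.2 ≤ p.2 q.1 := h1.trans (by linarith [(hbr q.1).1, (hbr q.1).2])
        have : q ∉ S := fun hq => absurd hq.1 (not_lt.2 h1)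
        simp [h1, h2, this]
      · by_cases h2 : q.2 ≤ p.2 q.1
        · have : q ∈ S := ⟨not_le.1 h1, h2⟩
          simp [h1, h2, this]
        · have : q ∉ S := fun hq => absurd hq.2 h2
          simp [h1, h2, this]
    rw [hfun, MeasureTheory.integral_indicator_one hSmeas]
    have hr : (0:ℝ) ≤ 1 / (2 * M) * ε ^ 2 := by positivity
    have hsub : S ⊆ {q : (Fin k → ℝ) × ℝ | |q.2 - p.1 q.1| ≤ 1 / (2 * M) * ε ^ 2} := by
      intro q hq
      obtain ⟨h1, h2⟩ := hq
      have := hsize q.1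
      simp only [Set.mem_setOf_eq, abs_le]
      constructor <;> [linarith; linarith]
    have hle : P S ≤ ENNReal.ofReal (ε ^ 2) := by
      calc P S ≤ P {q : (Fin k → ℝ) × ℝ | |q.2 - p.1 q.1| ≤ 1 / (2 * M) * ε ^ 2} :=
            measure_mono hsub
        _ ≤ ENNReal.ofReal (2 * M * (1 / (2 * M) * ε ^ 2)) := hDens p.1 hml _ hr
        _ = ENNReal.ofReal (ε ^ 2) := by
            congr 1
            field_simp
    calc (P S).toReal ≤ (ENNReal.ofReal (ε ^ 2)).toReal :=
          ENNReal.toReal_mono ENNReal.ofReal_ne_top hle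
      _ = ε ^ 2 := ENNReal.toReal_ofReal (by positivity)
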